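/- Let Γ be a subgroup of SL(2,ℝ), r a nonnegative integer, D an open subset of ℍ stable under the action of Γ, and g an analytic function on D satisfying g(γ·z) = (cz+d)^{2(r+1)} g(z) for all γ = [[a,b],[c,d]] ∈ Γ and z ∈ D. If f is an analytic function on D satisfying f^{(r+1)} + g f = 0 on D, then for every γ = [[a,b],[c,d]] ∈ Γ, the function f|_{−r}γ : z ↦ (cz+d)^r f(γ·z) is analytic on D and also satisfies (f|_{−r}γ)^{(r+1)} + g · (f|_{−r}γ) = 0 on D. -/

import Mathlib

/-- The automorphy factor `cz + d` for `γ = [[a,b],[c,d]] ∈ SL(2,ℝ)`. -/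
noncomputable def jfac (γ : Matrix.SpecialLinearGroup (Fin 2) ℝ) (z : ℂ) : ℂ :=
  (((γ : Matrix (Fin 2) (Fin 2) ℝ) 1 0 : ℝ) : ℂ) * z +
    (((γ : Matrix (Fin 2) (Fin 2) ℝ) 1 1 : ℝ) : ℂ)

/-- The Möbius action `γ·z = (az+b)/(cz+d)` of `γ ∈ SL(2,ℝ)` on `z ∈ ℂ`. -/
noncomputable def moebius (γ : Matrix.SpecialLinearGroup (Fin 2) ℝ) (z : ℂ) : ℂ :=
  ((((γ : Matrix (Fin 2) (Fin 2) ℝ) 0 0 : ℝ) : ℂ) * z +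
    (((γ : Matrix (Fin 2) (Fin 2) ℝ) 0 1 : ℝ) : ℂ)) / jfac γ z

/-- The coefficients appearing in the Leibniz-type expansion behind Bol's identity. -/
noncomputable def bolA (r : ℕ) : ℕ → ℕ → ℂ
  | 0, 0 => 1
  | 0, _+1 => 0
  | n+1, 0 => ((r : ℂ) - n) * bolA r n 0
  | n+1, k+1 => ((r : ℂ) - n - (k+1)) * bolA r n (k+1) + bolA r n k

lemma bolA_eq_zero (r : ℕ) : ∀ n k, n < k → bolA r n k = 0 := by
  intro n
  induction n with
  | zero => intro k hk; match k, hk with | k+1, _ => rfl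
  | succ n ih =>
    intro k hk
    match k, hk with
    | k+1, hk =>
      show ((r : ℂ) - n - (k+1)) * bolA r n (k+1) + bolA r n k = 0
      rw [ih (k+1) (by omega), ih k (by omega)]; ring

lemma bolA_diag (r : ℕ) : ∀ n, bolA r n n = 1 := by
  intro n
  induction n with
  | zero => rfl
  | succ n ih =>
    show ((r : ℂ) - n - (n+1)) * bolA r n (n+1) + bolA r n n = 1
    rw [bolA_eq_zero r n (n+1) (by omega), ih]; ring

lemma bolA_closed (r : ℕ) : ∀ n k, k ≤ n →
    bolA r n k = (n.choose k : ℂ) * ∏ i ∈ Finset.range (n - k), ((r : ℂ) - k - i) := by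
  intro n
  induction n with
  | zero => intro k hk; interval_cases k; simp [bolA]
  | succ n ih =>
    intro k hk
    match k with
    | 0 =>
      show ((r : ℂ) - n) * bolA r n 0 = _
      rw [ih 0 (Nat.zero_le _)]
      simp only [Nat.choose_zero_right, Nat.cast_one, one_mul, Nat.sub_zero,
        Finset.prod_range_succ]
      push_cast
      ring
    | k+1 =>
      show ((r : ℂ) - n - (k+1)) * bolA r n (k+1) + bolA r n k = _
      rcases Nat.lt_or_ge n (k+1) with hnk | hnk
      · have hkn : k = n := by omega
        subst hkn
        rw [bolA_eq_zero r k (k+1) (by omega), bolA_diag]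
        simp
      · rw [ih (k+1) hnk, ih k (by omega)]
        have hm : n - k = (n - (k+1)) + 1 := by omega
        have hm2 : n + 1 - (k+1) = (n - (k+1)) + 1 := by omega
        set m := n - (k+1) with hmdef
        have hmc : (m : ℂ) = (n : ℂ) - (k+1) := by
          rw [hmdef]; push_cast [Nat.cast_sub hnk]; ring
        have hshift : ∀ i ∈ Finset.range m, ((r : ℂ) - k - ((i+1 : ℕ) : ℂ)) = ((r : ℂ) - ((k+1 : ℕ) : ℂ) - i) := by
          intro i _; push_cast; ring
        have e1 : ∏ i ∈ Finset.range (n - k), ((r : ℂ) - k - i)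
            = ((r : ℂ) - k) * ∏ i ∈ Finset.range m, ((r : ℂ) - ((k+1 : ℕ) : ℂ) - i) := by
          rw [hm, Finset.prod_range_succ', Finset.prod_congr rfl hshift]
          push_cast; ring
        have e2 : ∏ i ∈ Finset.range (n + 1 - (k+1)), ((r : ℂ) - ((k+1 : ℕ) : ℂ) - i)
            = (∏ i ∈ Finset.range m, ((r : ℂ) - ((k+1 : ℕ) : ℂ) - i)) * ((r : ℂ) - n) := by
          rw [hm2, Finset.prod_range_succ, hmc]; push_cast; ring
        have hrec : ((n.choose (k+1) : ℂ)) * (k+1) = (n.choose k : ℂ) * ((n : ℂ) - k) := by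
          have h := Nat.choose_succ_right_eq n k
          have h2 : ((n.choose (k+1) * (k+1) : ℕ) : ℂ) = ((n.choose k * (n - k) : ℕ) : ℂ) := by
            exact_mod_cast h
          push_cast [Nat.cast_sub (by omega : k ≤ n)] at h2
          exact h2
        rw [e1, e2, Nat.choose_succ_succ' n k]
        set P := ∏ i ∈ Finset.range m, ((r : ℂ) - ((k+1 : ℕ) : ℂ) - i) with hP
        push_cast
        linear_combination (-P) * hrec

lemma bolA_top_eq_zero (r k : ℕ) (hk : k ≤ r) : bolA r (r+1) k = 0 := by
  rw [bolA_closed r (r+1) k (by omega)]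
  have hmem : r - k ∈ Finset.range (r + 1 - k) := Finset.mem_range.mpr (by omega)
  rw [Finset.prod_eq_zero hmem (by push_cast [Nat.cast_sub hk]; ring), mul_zero]

lemma bol_recombine (r n : ℕ) (c J : ℂ) (E : ℕ → ℂ) :
    ∑ k ∈ Finset.range (n+1),
      (((r : ℂ) - n - k) * bolA r n k * c^(n-k) * c * (J^((r:ℤ) - (n+1:ℕ) - k) * E k)
        + bolA r n k * c^(n-k) * (J^((r:ℤ) - (n+1:ℕ) - (k+1:ℕ)) * E (k+1)))
    = ∑ k ∈ Finset.range (n+2),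
        bolA r (n+1) k * c^(n+1-k) * (J^((r:ℤ) - (n+1:ℕ) - k) * E k) := by
  rw [Finset.sum_add_distrib]
  rw [Finset.sum_range_succ' (fun k => bolA r (n+1) k * c^(n+1-k) * (J^((r:ℤ) - (n+1:ℕ) - k) * E k)) (n+1)]
  have hsplit : ∀ k ∈ Finset.range (n+1),
      bolA r (n+1) (k+1) * c^(n+1-(k+1)) * (J^((r:ℤ) - (n+1:ℕ) - (k+1:ℕ)) * E (k+1))
      = ((r : ℂ) - n - (k+1)) * bolA r n (k+1) * c^(n-k) * (J^((r:ℤ) - (n+1:ℕ) - (k+1:ℕ)) * E (k+1))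
        + bolA r n k * c^(n-k) * (J^((r:ℤ) - (n+1:ℕ) - (k+1:ℕ)) * E (k+1)) := by
    intro k hk
    rw [show bolA r (n+1) (k+1) = ((r : ℂ) - n - (k+1)) * bolA r n (k+1) + bolA r n k from rfl,
      Nat.succ_sub_succ]
    ring
  rw [Finset.sum_congr rfl hsplit, Finset.sum_add_distrib]
  have h0 : bolA r (n+1) 0 * c^(n+1-0) * (J^((r:ℤ) - (n+1:ℕ) - (0:ℕ)) * E 0)
      = ((r : ℂ) - n - (0:ℕ)) * bolA r n 0 * c^(n-0) * c * (J^((r:ℤ) - (n+1:ℕ) - (0:ℕ)) * E 0) := by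
    rw [show bolA r (n+1) 0 = ((r : ℂ) - n) * bolA r n 0 from rfl, Nat.sub_zero, Nat.sub_zero]
    push_cast
    ring
  rw [h0]
  have hP : ∑ k ∈ Finset.range (n+1),
      ((r : ℂ) - n - k) * bolA r n k * c^(n-k) * c * (J^((r:ℤ) - (n+1:ℕ) - k) * E k)
      = (∑ k ∈ Finset.range (n+1),
        ((r : ℂ) - n - (k+1)) * bolA r n (k+1) * c^(n-k) * (J^((r:ℤ) - (n+1:ℕ) - (k+1:ℕ)) * E (k+1)))
        + ((r : ℂ) - n - (0:ℕ)) * bolA r n 0 * c^(n-0) * c * (J^((r:ℤ) - (n+1:ℕ) - (0:ℕ)) * E 0) := by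
    rw [Finset.sum_range_succ' (fun k => ((r : ℂ) - n - k) * bolA r n k * c^(n-k) * c * (J^((r:ℤ) - (n+1:ℕ) - k) * E k)) n]
    rw [Finset.sum_range_succ (fun k => ((r : ℂ) - n - (k+1)) * bolA r n (k+1) * c^(n-k) * (J^((r:ℤ) - (n+1:ℕ) - (k+1:ℕ)) * E (k+1))) n]
    rw [bolA_eq_zero r n (n+1) (by omega)]
    have hterm : ∀ k ∈ Finset.range n,
        ((r : ℂ) - n - ((k+1:ℕ):ℂ)) * bolA r n (k+1) * c^(n-(k+1)) * c * (J^((r:ℤ) - (n+1:ℕ) - ((k+1:ℕ):ℤ)) * E (k+1))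
        = ((r : ℂ) - n - (k+1)) * bolA r n (k+1) * c^(n-k) * (J^((r:ℤ) - (n+1:ℕ) - (k+1:ℕ)) * E (k+1)) := by
      intro k hk
      have hk' := Finset.mem_range.mp hk
      have hnk : n - k = (n - (k+1)) + 1 := by omega
      rw [hnk, pow_succ]
      push_cast
      ring
    rw [Finset.sum_congr rfl hterm]
    push_cast
    ring
  rw [hP]
  ring

lemma det_entries (γ : Matrix.SpecialLinearGroup (Fin 2) ℝ) :
    (((γ : Matrix (Fin 2) (Fin 2) ℝ) 0 0 : ℝ) : ℂ) * ((γ : Matrix (Fin 2) (Fin 2) ℝ) 1 1 : ℝ)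
      - ((γ : Matrix (Fin 2) (Fin 2) ℝ) 0 1 : ℝ) * ((γ : Matrix (Fin 2) (Fin 2) ℝ) 1 0 : ℝ) = 1 := by
  have h := γ.2
  rw [Matrix.det_fin_two] at h
  exact_mod_cast h

lemma jfac_ne_zero (γ : Matrix.SpecialLinearGroup (Fin 2) ℝ) {z : ℂ} (hz : 0 < z.im) :
    jfac γ z ≠ 0 := by
  intro h
  set c := (γ : Matrix (Fin 2) (Fin 2) ℝ) 1 0
  set d := (γ : Matrix (Fin 2) (Fin 2) ℝ) 1 1
  have him : ((c : ℂ) * z + (d : ℂ)).im = c * z.im := by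
    simp [Complex.add_im, Complex.mul_im]
  have hc : c = 0 := by
    have hh : ((c : ℂ) * z + (d : ℂ)).im = Complex.im 0 := congrArg Complex.im h
    rw [him] at hh
    simp only [Complex.zero_im] at hh
    rcases mul_eq_zero.mp hh with h' | h'
    · exact h'
    · exact absurd h' hz.ne'
  have hd : d = 0 := by
    have h2 : (c : ℂ) * z + (d : ℂ) = 0 := h
    rw [hc] at h2
    simpa using h2
  have hdet := det_entries γ
  rw [show (γ : Matrix (Fin 2) (Fin 2) ℝ) 1 1 = d from rfl,
    show (γ : Matrix (Fin 2) (Fin 2) ℝ) 1 0 = c from rfl, hc, hd] at hdet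
  simp at hdet

lemma hasDerivAt_jfac (γ : Matrix.SpecialLinearGroup (Fin 2) ℝ) (z : ℂ) :
    HasDerivAt (jfac γ) (((γ : Matrix (Fin 2) (Fin 2) ℝ) 1 0 : ℝ) : ℂ) z := by
  have h := ((hasDerivAt_id z).const_mul
    ((((γ : Matrix (Fin 2) (Fin 2) ℝ) 1 0 : ℝ)) : ℂ)).add_const
    (((γ : Matrix (Fin 2) (Fin 2) ℝ) 1 1 : ℝ) : ℂ)
  simp only [id, mul_one] at h
  exact h

lemma hasDerivAt_moebius (γ : Matrix.SpecialLinearGroup (Fin 2) ℝ) {z : ℂ}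
    (h : jfac γ z ≠ 0) :
    HasDerivAt (moebius γ) ((jfac γ z) ^ (-2 : ℤ)) z := by
  set a := (((γ : Matrix (Fin 2) (Fin 2) ℝ) 0 0 : ℝ) : ℂ)
  set b := (((γ : Matrix (Fin 2) (Fin 2) ℝ) 0 1 : ℝ) : ℂ)
  set c := (((γ : Matrix (Fin 2) (Fin 2) ℝ) 1 0 : ℝ) : ℂ)
  have hnum : HasDerivAt (fun w : ℂ => a * w + b) a z := by
    simpa using ((hasDerivAt_id z).const_mul a).add_const b
  have hdiv := hnum.div (hasDerivAt_jfac γ z) h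
  refine HasDerivAt.congr_deriv hdiv (Eq.symm ?_)
  have hdet := det_entries γ
  have hj : jfac γ z = c * z + (((γ : Matrix (Fin 2) (Fin 2) ℝ) 1 1 : ℝ) : ℂ) := rfl
  have hnum1 : a * jfac γ z - (a * z + b) * (((γ : Matrix (Fin 2) (Fin 2) ℝ) 1 0 : ℝ) : ℂ) = 1 := by
    rw [hj]; linear_combination hdet
  rw [hnum1, one_div, ← zpow_natCast (jfac γ z) 2, ← _root_.zpow_neg]
  norm_num

/-- If `g` is an automorphic form of weight `2(r+1)` on a `Γ`-stable domain `D ⊆ ℍ` and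
`f` solves `f^{(r+1)} + g f = 0` on `D`, then so does `f|₋ᵣγ : z ↦ (cz+d)^r f(γ·z)`
for every `γ ∈ Γ`. -/
theorem slash_preserves_solution_space
    (Γ : Subgroup (Matrix.SpecialLinearGroup (Fin 2) ℝ)) (r : ℕ)
    (D : Set ℂ) (hDo : IsOpen D) (hDH : D ⊆ {z : ℂ | 0 < z.im})
    (hstab : ∀ γ : Γ, ∀ z ∈ D, moebius γ z ∈ D)
    (g : ℂ → ℂ) (hg : AnalyticOnNhd ℂ g D)
    (hauto : ∀ γ : Γ, ∀ z ∈ D, g (moebius γ z) = (jfac γ z) ^ (2 * (r + 1)) * g z)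
    (f : ℂ → ℂ) (hf : AnalyticOnNhd ℂ f D)
    (hode : ∀ z ∈ D, iteratedDeriv (r + 1) f z + g z * f z = 0) :
    ∀ γ : Γ,
      AnalyticOnNhd ℂ (fun z => (jfac γ z) ^ r * f (moebius γ z)) D ∧
      ∀ z ∈ D,
        iteratedDeriv (r + 1) (fun w => (jfac γ w) ^ r * f (moebius γ w)) z +
          g z * ((jfac γ z) ^ r * f (moebius γ z)) = 0 := by
  intro γ
  set G := (γ : Matrix.SpecialLinearGroup (Fin 2) ℝ) with hG
  set c := (((G : Matrix (Fin 2) (Fin 2) ℝ) 1 0 : ℝ) : ℂ) with hc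
  set U := {z : ℂ | 0 < z.im ∧ moebius G z ∈ D} with hU
  have hjneU : ∀ z ∈ U, jfac G z ≠ 0 := fun z hz => jfac_ne_zero G hz.1
  have hDU : D ⊆ U := fun z hz => ⟨hDH hz, hstab γ z hz⟩
  have hjA : ∀ z : ℂ, AnalyticAt ℂ (jfac G) z := fun z =>
    (analyticAt_const.mul analyticAt_id).add analyticAt_const
  have hmoA : ∀ z ∈ U, AnalyticAt ℂ (moebius G) z := by
    intro z hz
    exact AnalyticAt.div ((analyticAt_const.mul analyticAt_id).add analyticAt_const)
      (hjA z) (hjneU z hz)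
  have hUo : IsOpen U := by
    rw [isOpen_iff_mem_nhds]
    intro z hz
    have him : {w : ℂ | 0 < w.im} ∈ nhds z :=
      (isOpen_lt continuous_const Complex.continuous_im).mem_nhds hz.1
    have hpre : moebius G ⁻¹' D ∈ nhds z :=
      (hmoA z hz).continuousAt.preimage_mem_nhds (hDo.mem_nhds hz.2)
    exact Filter.mem_of_superset (Filter.inter_mem him hpre) (fun w hw => ⟨hw.1, hw.2⟩)
  have hfk : ∀ k, AnalyticOnNhd ℂ (iteratedDeriv k f) D := by
    intro k
    induction k with
    | zero => simpa [iteratedDeriv_zero] using hf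
    | succ k ih => rw [iteratedDeriv_succ]; exact ih.deriv
  -- the key identity (Leibniz-type expansion of the iterated derivative)
  have key : ∀ n, ∀ z ∈ U,
      iteratedDeriv n (fun w => jfac G w ^ r * f (moebius G w)) z
      = ∑ k ∈ Finset.range (n+1),
          bolA r n k * c^(n-k) * ((jfac G z)^((r:ℤ) - n - k) * iteratedDeriv k f (moebius G z)) := by
    intro n
    induction n with
    | zero =>
      intro z hz
      simp only [iteratedDeriv_zero, zero_add, Finset.range_one, Finset.sum_singleton]
      rw [show bolA r 0 0 = 1 from rfl]
      rw [show ((r:ℤ) - ((0:ℕ):ℤ) - ((0:ℕ):ℤ)) = ((r:ℕ):ℤ) from by push_cast; ring, zpow_natCast]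
      simp
    | succ n ih =>
      intro z hz
      rw [iteratedDeriv_succ]
      have hev : (iteratedDeriv n fun w => jfac G w ^ r * f (moebius G w)) =ᶠ[nhds z]
          (fun w => ∑ k ∈ Finset.range (n+1),
            bolA r n k * c^(n-k) * ((jfac G w)^((r:ℤ) - n - k) * iteratedDeriv k f (moebius G w))) := by
        filter_upwards [hUo.mem_nhds hz] with w hw using ih w hw
      rw [hev.deriv_eq]
      have hjz := hjneU z hz
      have hterm : ∀ k ∈ Finset.range (n+1), HasDerivAt
          (fun w => bolA r n k * c^(n-k) * ((jfac G w)^((r:ℤ) - n - k) * iteratedDeriv k f (moebius G w)))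
          (((r : ℂ) - n - k) * bolA r n k * c^(n-k) * c *
              ((jfac G z)^((r:ℤ) - (n+1:ℕ) - k) * iteratedDeriv k f (moebius G z))
            + bolA r n k * c^(n-k) *
              ((jfac G z)^((r:ℤ) - (n+1:ℕ) - (k+1:ℕ)) * iteratedDeriv (k+1) f (moebius G z))) z := by
        intro k hk
        have hjd := hasDerivAt_jfac G z
        have hzp : HasDerivAt (fun w => (jfac G w)^((r:ℤ) - n - k))
            ((((r:ℤ) - n - k : ℤ) : ℂ) * (jfac G z)^((r:ℤ) - n - k - 1) * c) z := by
          have h1 := (hasDerivAt_zpow ((r:ℤ) - n - k) (jfac G z) (Or.inl hjz)).comp z hjd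
          exact h1
        have hmo := hasDerivAt_moebius G hjz
        have hdk : HasDerivAt (fun w => iteratedDeriv k f (moebius G w))
            (iteratedDeriv (k+1) f (moebius G z) * (jfac G z)^(-2:ℤ)) z := by
          have hA : AnalyticAt ℂ (iteratedDeriv k f) (moebius G z) := hfk k _ hz.2
          have h1 := hA.differentiableAt.hasDerivAt
          rw [← iteratedDeriv_succ] at h1
          exact h1.comp z hmo
        have hmul := (hzp.mul hdk).const_mul (bolA r n k * c^(n-k))
        refine HasDerivAt.congr_deriv hmul (Eq.symm ?_)
        have ecast : ((((r:ℤ) - n - k) : ℤ) : ℂ) = (r : ℂ) - n - k := by push_cast; ring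
        have e1 : (jfac G z)^((r:ℤ) - n - k - 1) = (jfac G z)^((r:ℤ) - ((n+1:ℕ):ℤ) - k) := by
          congr 1; push_cast; ring
        have e2 : (jfac G z)^((r:ℤ) - n - k) * (jfac G z)^(-2:ℤ)
            = (jfac G z)^((r:ℤ) - ((n+1:ℕ):ℤ) - ((k+1:ℕ):ℤ)) := by
          rw [← zpow_add₀ hjz]; congr 1; push_cast; ring
        push_cast at e1 e2 ⊢
        linear_combination (-((((r : ℂ) - n - k)) * (bolA r n k * c^(n-k)) * c * iteratedDeriv k f (moebius G z))) * e1
          + (-((bolA r n k * c^(n-k)) * iteratedDeriv (k+1) f (moebius G z))) * e2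
      have hsum := HasDerivAt.fun_sum hterm
      rw [hsum.deriv]
      exact bol_recombine r n c (jfac G z) (fun k => iteratedDeriv k f (moebius G z))
  constructor
  · intro z hz
    exact ((hjA z).pow r).mul ((hf _ (hstab γ z hz)).comp (hmoA z (hDU hz)))
  · intro z hz
    have hkey := key (r+1) z (hDU hz)
    have hjz := hjneU z (hDU hz)
    -- the sum collapses to the single term k = r+1
    have hcollapse : ∑ k ∈ Finset.range (r+2),
        bolA r (r+1) k * c^(r+1-k) * ((jfac G z)^((r:ℤ) - (r+1:ℕ) - k) * iteratedDeriv k f (moebius G z))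
        = (jfac G z)^(-((r:ℤ)+2)) * iteratedDeriv (r+1) f (moebius G z) := by
      rw [Finset.sum_eq_single (r+1)]
      · rw [bolA_diag, Nat.sub_self]
        rw [show ((r:ℤ) - (r+1:ℕ) - ((r+1:ℕ):ℤ)) = -((r:ℤ)+2) from by push_cast; ring]
        ring
      · intro k hkmem hkne
        have hk : k ≤ r := by
          have := Finset.mem_range.mp hkmem; omega
        rw [bolA_top_eq_zero r k hk]
        ring
      · intro h
        exact absurd (Finset.mem_range.mpr (by omega)) h
    rw [hkey, hcollapse]
    have hmoD : moebius G z ∈ D := hstab γ z hz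
    have hODE := hode (moebius G z) hmoD
    have hfr : iteratedDeriv (r+1) f (moebius G z) = -(g (moebius G z) * f (moebius G z)) := by
      linear_combination hODE
    rw [hfr, hauto γ z hz]
    have hzp : (jfac G z)^(-((r:ℤ)+2)) * ((jfac G z) ^ (2 * (r + 1)) * g z * f (moebius G z))
        = (jfac G z) ^ r * g z * f (moebius G z) := by
      rw [← zpow_natCast (jfac G z) (2 * (r+1)), ← zpow_natCast (jfac G z) r]
      rw [show (jfac G z)^(-((r:ℤ)+2)) * ((jfac G z)^((2*(r+1):ℕ):ℤ) * g z * f (moebius G z))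
          = ((jfac G z)^(-((r:ℤ)+2)) * (jfac G z)^((2*(r+1):ℕ):ℤ)) * g z * f (moebius G z) from by ring]
      rw [← zpow_add₀ hjz]
      congr 3
      push_cast
      ring
    linear_combination (-(1:ℂ)) * hzp
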